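/- Let P be an ε_k-noisy sample of a compact set K in a metric space X, and let Q be the output of the Declutter algorithm on (P,k). Then the Hausdorff distance between K and Q satisfies δ_H(K, Q) ≤ 7ε_k. -/

import Mathlib

open Metric

/-- Core loop of the Declutter algorithm: scan the (pre-sorted) list, keeping a point `p`
iff no previously kept point lies in the open ball `B(p, 2 f p)` (w.r.t. distance `d`). -/
noncomputable def declutterAux {X : Type*} (d : X → X → ℝ) (f : X → ℝ) :
    List X → List X → List X
  | Q, [] => Q
  | Q, p :: rest =>
    if ∀ q ∈ Q, 2 * f p ≤ d p q then declutterAux d f (Q ++ [p]) rest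
    else declutterAux d f Q rest

noncomputable def declutter {X : Type*} (d : X → X → ℝ) (f : X → ℝ) (L : List X) : List X :=
  declutterAux d f [] L

/-- `Q` is a possible output of the Declutter algorithm on `P`, with robust distance
function `f`: the points of `P` are processed in nondecreasing order of `f`
(ties broken arbitrarily). -/
def IsDeclutterOutput {X : Type*} (d : X → X → ℝ) (f : X → ℝ) (P : Finset X)
    (Q : List X) : Prop :=
  ∃ L : List X, L.Perm P.toList ∧ L.Pairwise (fun a b => f a ≤ f b) ∧ Q = declutter d f L

/-! ### Auxiliary lemmas about the Declutter loop -/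

section DeclutterLemmas

variable {X : Type*} (d : X → X → ℝ) (f : X → ℝ)

lemma declutterAux_append : ∀ (L Q : List X),
    ∃ S, S.Sublist L ∧ declutterAux d f Q L = Q ++ S := by
  intro L
  induction L with
  | nil => exact fun Q => ⟨[], List.nil_sublist _, by simp [declutterAux]⟩
  | cons p rest ih =>
    intro Q
    by_cases h : ∀ q ∈ Q, 2 * f p ≤ d p q
    · obtain ⟨S, hS, hEq⟩ := ih (Q ++ [p])
      refine ⟨p :: S, List.Sublist.cons₂ p hS, ?_⟩
      simp only [declutterAux, if_pos h, hEq, List.append_assoc, List.singleton_append]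
    · obtain ⟨S, hS, hEq⟩ := ih Q
      exact ⟨S, List.Sublist.cons p hS, by simp only [declutterAux, if_neg h, hEq]⟩

lemma subset_declutterAux (L Q : List X) : Q ⊆ declutterAux d f Q L := by
  obtain ⟨S, _, hEq⟩ := declutterAux_append d f L Q
  rw [hEq]
  exact List.subset_append_left Q S

lemma declutterAux_pairwise : ∀ (L Q : List X),
    Q.Pairwise (fun r q => 2 * f q ≤ d q r) →
    (declutterAux d f Q L).Pairwise (fun r q => 2 * f q ≤ d q r) := by
  intro L
  induction L with
  | nil => intro Q h; simpa [declutterAux] using h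
  | cons p rest ih =>
    intro Q hQ
    by_cases h : ∀ q ∈ Q, 2 * f p ≤ d p q
    · simp only [declutterAux, if_pos h]
      refine ih _ (List.pairwise_append.mpr ⟨hQ, List.pairwise_singleton _ _, ?_⟩)
      intro r hr q hq
      rw [List.mem_singleton] at hq
      subst hq
      exact h r hr
    · simp only [declutterAux, if_neg h]
      exact ih _ hQ

lemma declutterAux_cover : ∀ (L Q₀ : List X),
    (∀ r ∈ Q₀, ∀ p ∈ L, f r ≤ f p) → L.Pairwise (fun a b => f a ≤ f b) →
    ∀ p ∈ L, ∃ r ∈ declutterAux d f Q₀ L, (d p r < 2 * f p ∧ f r ≤ f p) ∨ r = p := by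
  intro L
  induction L with
  | nil => intro Q₀ _ _ p hp; exact absurd hp List.not_mem_nil
  | cons hd rest ih =>
    intro Q₀ hQ₀ hsort p hp
    by_cases h : ∀ q ∈ Q₀, 2 * f hd ≤ d hd q
    · simp only [declutterAux, if_pos h]
      rcases List.mem_cons.mp hp with rfl | hp'
      · refine ⟨p, ?_, Or.inr rfl⟩
        exact subset_declutterAux d f rest (Q₀ ++ [p]) (by simp)
      · refine ih (Q₀ ++ [hd]) ?_ (List.pairwise_cons.mp hsort).2 p hp'
        intro r hr p' hp''
        rcases List.mem_append.mp hr with hr' | hr'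
        · exact hQ₀ r hr' p' (List.mem_cons_of_mem _ hp'')
        · rw [List.mem_singleton] at hr'
          subst hr'
          exact (List.pairwise_cons.mp hsort).1 p' hp''
    · simp only [declutterAux, if_neg h]
      push_neg at h
      obtain ⟨q, hq, hqlt⟩ := h
      rcases List.mem_cons.mp hp with rfl | hp'
      · exact ⟨q, subset_declutterAux d f rest Q₀ hq,
          Or.inl ⟨hqlt, hQ₀ q hq p List.mem_cons_self⟩⟩
      · refine ih Q₀ ?_ (List.pairwise_cons.mp hsort).2 p hp'
        exact fun r hr p' hp'' => hQ₀ r hr p' (List.mem_cons_of_mem _ hp'')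

end DeclutterLemmas

/-! ### Auxiliary lemmas about multisets and sorted lists -/

/-- Pull back a submultiset of a mapped multiset. -/
lemma multiset_exists_pullback {α β : Type*} {f : α → β} :
    ∀ {m : Multiset β} {s : Multiset α}, m ≤ s.map f → ∃ T ≤ s, T.map f = m := by
  letI := Classical.decEq α
  letI := Classical.decEq β
  intro m
  induction m using Multiset.induction with
  | empty => exact fun h => ⟨0, by simp⟩
  | cons b m ih =>
    intro s h
    have hb : b ∈ s.map f := Multiset.mem_of_le h (Multiset.mem_cons_self b m)
    obtain ⟨a, ha, hfa⟩ := Multiset.mem_map.mp hb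
    have hs : s = a ::ₘ s.erase a := (Multiset.cons_erase ha).symm
    have h2 : b ::ₘ m ≤ b ::ₘ (s.erase a).map f := by
      calc b ::ₘ m ≤ s.map f := h
        _ = b ::ₘ (s.erase a).map f := by
            conv_lhs => rw [hs]
            rw [Multiset.map_cons, hfa]
    obtain ⟨T, hT, hTm⟩ := ih ((Multiset.cons_le_cons_iff b).mp h2)
    refine ⟨a ::ₘ T, ?_, by rw [Multiset.map_cons, hfa, hTm]⟩
    rw [hs]
    exact Multiset.cons_le_cons a hT

/-- Pointwise domination implies domination of the sums of squares. -/
lemma forall₂_sum_sq_le : ∀ {l₁ l₂ : List ℝ}, List.Forall₂ (· ≤ ·) l₁ l₂ →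
    (∀ a ∈ l₁, 0 ≤ a) → (l₁.map (fun r => r ^ 2)).sum ≤ (l₂.map (fun r => r ^ 2)).sum := by
  intro l₁ l₂ h
  induction h with
  | nil => simp
  | @cons a b l₁ l₂ hab _ ih =>
    intro hnn
    simp only [List.map_cons, List.sum_cons]
    have ha : 0 ≤ a := hnn a List.mem_cons_self
    exact add_le_add (pow_le_pow_left₀ ha hab 2) (ih fun x hx => hnn x (List.mem_cons_of_mem _ hx))

/-- `take`-domination: a sorted enumeration of a submultiset dominates the sorted
enumeration of the ambient multiset, element by element. -/
lemma sorted_take_dominated : ∀ (t l : List ℝ), l.Pairwise (· ≤ ·) → t.Pairwise (· ≤ ·) →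
    (↑t : Multiset ℝ) ≤ ↑l → List.Forall₂ (· ≤ ·) (l.take t.length) t := by
  intro t
  induction t with
  | nil => intro l _ _ _; simp
  | cons b t ih =>
    intro l hl ht hle
    have hcard : (b :: t).length ≤ l.length := by
      simpa using Multiset.card_le_card hle
    match l, hl with
    | a :: l, hl =>
      have hbl : b ∈ a :: l := by
        have : b ∈ (↑(a :: l) : Multiset ℝ) := Multiset.mem_of_le hle (by simp)
        simpa using this
      have hab : a ≤ b := by
        rcases List.mem_cons.mp hbl with rfl | h
        · exact le_refl _
        · exact (List.pairwise_cons.mp hl).1 b h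
      have htail : (↑t : Multiset ℝ) ≤ ↑l := by
        refine Multiset.le_iff_count.mpr fun c => ?_
        have hcount := Multiset.le_iff_count.mp hle c
        rw [← Multiset.cons_coe, ← Multiset.cons_coe, Multiset.count_cons,
          Multiset.count_cons] at hcount
        by_cases hca : c = a
        · by_cases hcb : c = b
          · split_ifs at hcount <;> omega
          · have hnot : c ∉ t := by
              intro hc
              have hbc : b ≤ c := (List.pairwise_cons.mp ht).1 c hc
              have hablt : a < b := lt_of_le_of_ne hab fun h => hcb (hca.trans h)
              exact absurd hbc (not_le.mpr (by rw [hca]; exact hablt))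
            have h0 : Multiset.count c (↑t : Multiset ℝ) = 0 :=
              Multiset.count_eq_zero.mpr (by simpa using hnot)
            simp [h0]
        · split_ifs at hcount <;> omega
      have := ih l (List.pairwise_cons.mp hl).2 (List.pairwise_cons.mp ht).2 htail
      simpa using List.Forall₂.cons hab this

lemma head_min {l : List ℝ} (hs : l.Pairwise (· ≤ ·)) (hne : l ≠ []) :
    ∀ b ∈ l, l.head hne ≤ b := by
  cases l with
  | nil => exact absurd rfl hne
  | cons c rest =>
    intro b hb
    rcases List.mem_cons.mp hb with rfl | h
    · exact le_rfl
    · exact (List.pairwise_cons.mp hs).1 b h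

variable {X : Type*} [MetricSpace X]

/-- Sorted (nondecreasing) list of distances from `x` to the points of `P`. -/
noncomputable def sortedDists (P : Finset X) (x : X) : List ℝ :=
  (P.val.map (dist x)).sort (· ≤ ·)

/-- The k-distance: root mean square of the distances to the k nearest neighbors in `P`. -/
noncomputable def kdist (P : Finset X) (k : ℕ) (x : X) : ℝ :=
  Real.sqrt ((1 / (k : ℝ)) * (((sortedDists P x).take k).map (fun r => r ^ 2)).sum)

/-! ### Auxiliary lemmas about `kdist` -/

lemma sortedDists_coe (P : Finset X) (x : X) :
    ((sortedDists P x : List ℝ) : Multiset ℝ) = P.val.map (dist x) :=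
  Multiset.sort_eq _ _

lemma sortedDists_sorted (P : Finset X) (x : X) : (sortedDists P x).Pairwise (· ≤ ·) :=
  Multiset.pairwise_sort _ _

lemma sortedDists_length (P : Finset X) (x : X) : (sortedDists P x).length = P.card := by
  have := congrArg Multiset.card (sortedDists_coe P x)
  simpa using this

lemma sortedDists_nonneg (P : Finset X) (x : X) : ∀ a ∈ sortedDists P x, 0 ≤ a := by
  intro a ha
  have : a ∈ (↑(sortedDists P x) : Multiset ℝ) := by simpa using ha
  rw [sortedDists_coe] at this
  obtain ⟨p, _, hp⟩ := Multiset.mem_map.mp this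
  exact hp ▸ dist_nonneg

lemma kdist_nonneg (P : Finset X) (k : ℕ) (x : X) : 0 ≤ kdist P k x := Real.sqrt_nonneg _

lemma kdist_sum_nonneg (P : Finset X) (k : ℕ) (x : X) :
    0 ≤ (((sortedDists P x).take k).map (fun r => r ^ 2)).sum :=
  List.sum_nonneg fun r hr => by
    obtain ⟨a, _, rfl⟩ := List.mem_map.mp hr
    positivity

lemma sq_kdist (P : Finset X) (k : ℕ) (hk : 1 ≤ k) (x : X) :
    (kdist P k x) ^ 2 = (1 / (k : ℝ)) * (((sortedDists P x).take k).map (fun r => r ^ 2)).sum := by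
  rw [kdist, Real.sq_sqrt]
  have := kdist_sum_nonneg P k x
  positivity

/-- There is a sample point within `kdist` of any point. -/
lemma exists_near (P : Finset X) (k : ℕ) (hk : 1 ≤ k) (hkP : k ≤ P.card) (x : X) :
    ∃ p ∈ P, dist x p ≤ kdist P k x := by
  set l := sortedDists P x with hl
  have hlen : l.length = P.card := sortedDists_length P x
  have hne : l ≠ [] := by
    intro h
    rw [h] at hlen
    simp at hlen
    omega
  set a := l.head hne with hadef
  have hamem : a ∈ l := List.head_mem hne
  have ha0 : 0 ≤ a := sortedDists_nonneg P x a hamem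
  have hmin : ∀ b ∈ l, a ≤ b := head_min (sortedDists_sorted P x) hne
  have hlentake : (l.take k).length = k := by
    rw [List.length_take]
    omega
  have hsumlb : (k : ℝ) * a ^ 2 ≤ ((l.take k).map (fun r => r ^ 2)).sum := by
    have hforall : ∀ r ∈ (l.take k).map (fun r => r ^ 2), a ^ 2 ≤ r := by
      intro r hr
      obtain ⟨b, hb, rfl⟩ := List.mem_map.mp hr
      exact pow_le_pow_left₀ ha0 (hmin b (List.mem_of_mem_take hb)) 2
    have := List.card_nsmul_le_sum _ (a ^ 2) hforall
    rw [List.length_map, hlentake] at this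
    simpa [nsmul_eq_mul] using this
  have hk0 : (0 : ℝ) < k := by positivity
  have hale : a ≤ kdist P k x := by
    have h1 : a ^ 2 ≤ (1 / (k : ℝ)) * ((l.take k).map (fun r => r ^ 2)).sum := by
      rw [div_mul_eq_mul_div, le_div_iff₀ hk0, one_mul]
      linarith [hsumlb]
    calc a = Real.sqrt (a ^ 2) := (Real.sqrt_sq ha0).symm
      _ ≤ _ := Real.sqrt_le_sqrt h1
  have : a ∈ (↑l : Multiset ℝ) := by simpa using hamem
  rw [hl, sortedDists_coe] at this
  obtain ⟨p, hp, hpa⟩ := Multiset.mem_map.mp this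
  exact ⟨p, hp, by rw [hpa]; exact hale⟩

/-- The k-distance is 1-Lipschitz. -/
lemma kdist_le_add (P : Finset X) (k : ℕ) (hk : 1 ≤ k) (hkP : k ≤ P.card) (x p : X) :
    kdist P k p ≤ kdist P k x + dist x p := by
  classical
  set d := dist x p with hd
  have hd0 : 0 ≤ d := dist_nonneg
  set kx := kdist P k x with hkx
  have hkx0 : 0 ≤ kx := kdist_nonneg P k x
  have hk0 : (0 : ℝ) < k := by positivity
  have htake : (↑((sortedDists P x).take k) : Multiset ℝ) ≤ P.val.map (dist x) := by
    rw [← sortedDists_coe P x]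
    exact Multiset.coe_le.mpr (List.take_sublist k (sortedDists P x)).subperm
  obtain ⟨T, hT, hTmap⟩ := multiset_exists_pullback htake
  have hTcard : Multiset.card T = k := by
    have := congrArg Multiset.card hTmap
    simp only [Multiset.card_map, Multiset.coe_card, List.length_take] at this
    rw [this]
    have := sortedDists_length P x
    omega
  have hTnodup : T.Nodup := Multiset.nodup_of_le hT P.nodup
  set F : Finset X := ⟨T, hTnodup⟩ with hF
  have hFsum : ∀ g : X → ℝ, ∑ t ∈ F, g t = (T.map g).sum := fun g => rfl
  have hFcard : (F.card : ℝ) = (k : ℝ) := by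
    rw [hF]
    norm_cast
  have hSx : ∑ t ∈ F, dist x t ^ 2
      = (((sortedDists P x).take k).map (fun r => r ^ 2)).sum := by
    rw [hFsum]
    have : T.map (fun t => dist x t ^ 2) = (T.map (dist x)).map (fun r => r ^ 2) := by
      rw [Multiset.map_map]; rfl
    rw [this, hTmap]
    simp
  have hSxval : ∑ t ∈ F, dist x t ^ 2 = (k : ℝ) * kx ^ 2 := by
    rw [hSx, hkx, sq_kdist P k hk x]
    field_simp
  have hmin : (((sortedDists P p).take k).map (fun r => r ^ 2)).sum
      ≤ ∑ t ∈ F, dist p t ^ 2 := by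
    set m : Multiset ℝ := T.map (dist p) with hm
    have hmle : m ≤ ↑(sortedDists P p) := by
      rw [sortedDists_coe]
      exact Multiset.map_le_map hT
    set t' : List ℝ := m.sort (· ≤ ·) with ht'
    have ht'coe : (↑t' : Multiset ℝ) = m := Multiset.sort_eq _ _
    have ht'len : t'.length = k := by
      rw [ht', Multiset.length_sort, hm, Multiset.card_map, hTcard]
    have hdom := sorted_take_dominated t' (sortedDists P p) (sortedDists_sorted P p)
      (Multiset.pairwise_sort _ _) (by rw [ht'coe]; exact hmle)
    rw [ht'len] at hdom
    have hsq := forall₂_sum_sq_le hdom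
      (fun a ha => sortedDists_nonneg P p a (List.mem_of_mem_take ha))
    calc (((sortedDists P p).take k).map (fun r => r ^ 2)).sum
        ≤ (t'.map (fun r => r ^ 2)).sum := hsq
      _ = ((m.map (fun r => r ^ 2)) : Multiset ℝ).sum := by
          rw [← ht'coe]; simp
      _ = ∑ t ∈ F, dist p t ^ 2 := by
          rw [hFsum, hm, Multiset.map_map]; rfl
  have htri : ∑ t ∈ F, dist p t ^ 2 ≤ ∑ t ∈ F, (dist x t + d) ^ 2 := by
    refine Finset.sum_le_sum fun t _ => ?_
    have h1 : dist p t ≤ dist x t + d := by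
      rw [hd, dist_comm x p]
      calc dist p t ≤ dist p x + dist x t := dist_triangle p x t
        _ = dist x t + dist p x := by ring
    exact pow_le_pow_left₀ dist_nonneg h1 2
  have hsum0 : 0 ≤ ∑ t ∈ F, dist x t := Finset.sum_nonneg fun t _ => dist_nonneg
  have hcauchy : (∑ t ∈ F, dist x t) ≤ (k : ℝ) * kx := by
    have h1 : (∑ t ∈ F, dist x t) ^ 2 ≤ (F.card : ℝ) * ∑ t ∈ F, dist x t ^ 2 :=
      sq_sum_le_card_mul_sum_sq
    rw [hFcard, hSxval] at h1
    have h2 : (∑ t ∈ F, dist x t) ^ 2 ≤ ((k : ℝ) * kx) ^ 2 := by nlinarith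
    calc (∑ t ∈ F, dist x t) = Real.sqrt ((∑ t ∈ F, dist x t) ^ 2) := (Real.sqrt_sq hsum0).symm
      _ ≤ Real.sqrt (((k : ℝ) * kx) ^ 2) := Real.sqrt_le_sqrt h2
      _ = (k : ℝ) * kx := Real.sqrt_sq (by positivity)
  have hexpand : ∑ t ∈ F, (dist x t + d) ^ 2
      = (∑ t ∈ F, dist x t ^ 2) + 2 * d * (∑ t ∈ F, dist x t) + (k : ℝ) * d ^ 2 := by
    have : ∀ t ∈ F, (dist x t + d) ^ 2 = dist x t ^ 2 + 2 * d * dist x t + d ^ 2 :=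
      fun t _ => by ring
    rw [Finset.sum_congr rfl this]
    rw [Finset.sum_add_distrib, Finset.sum_add_distrib, ← Finset.mul_sum, Finset.sum_const]
    rw [nsmul_eq_mul, hFcard]
  have hfinal : (1 / (k : ℝ)) * (((sortedDists P p).take k).map (fun r => r ^ 2)).sum
      ≤ (kx + d) ^ 2 := by
    have h2 : (((sortedDists P p).take k).map (fun r => r ^ 2)).sum
        ≤ (k : ℝ) * (kx + d) ^ 2 := by
      calc (((sortedDists P p).take k).map (fun r => r ^ 2)).sum
          ≤ ∑ t ∈ F, dist p t ^ 2 := hmin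
        _ ≤ ∑ t ∈ F, (dist x t + d) ^ 2 := htri
        _ = (∑ t ∈ F, dist x t ^ 2) + 2 * d * (∑ t ∈ F, dist x t) + (k : ℝ) * d ^ 2 := hexpand
        _ ≤ (k : ℝ) * kx ^ 2 + 2 * d * ((k : ℝ) * kx) + (k : ℝ) * d ^ 2 := by
            rw [hSxval]
            have := mul_le_mul_of_nonneg_left hcauchy (by linarith : (0:ℝ) ≤ 2 * d)
            linarith
        _ = (k : ℝ) * (kx + d) ^ 2 := by ring
    rw [div_mul_eq_mul_div, one_mul, div_le_iff₀ hk0]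
    linarith
  calc kdist P k p
      = Real.sqrt ((1 / (k : ℝ)) * (((sortedDists P p).take k).map (fun r => r ^ 2)).sum) := rfl
    _ ≤ Real.sqrt ((kx + d) ^ 2) := Real.sqrt_le_sqrt hfinal
    _ = kx + d := Real.sqrt_sq (by linarith)

/-- `P` is an ε_k-noisy sample of `K`:
(1) the k-distance is at most ε on `K`; (2) every point of the space is within
`kdist + ε` of `K`. -/
def NoisySample (P : Finset X) (k : ℕ) (K : Set X) (ε : ℝ) : Prop :=
  (∀ x ∈ K, kdist P k x ≤ ε) ∧ ∀ x : X, infDist x K ≤ kdist P k x + ε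

/-- Hausdorff-distance guarantee for the Declutter algorithm. -/
theorem declutter_hausdorff (P : Finset X) (k : ℕ) (hk : 1 ≤ k)
    (hkP : k ≤ P.card) (K : Set X) (hK : IsCompact K) (hKne : K.Nonempty)
    (ε : ℝ) (hsample : NoisySample P k K ε)
    (Q : List X) (hQ : IsDeclutterOutput (fun a b => dist a b) (kdist P k) P Q) :
    hausdorffDist K {x | x ∈ Q} ≤ 7 * ε := by
  obtain ⟨L, hperm, hsortL, hQdef⟩ := hQ
  set f := kdist P k with hf
  set D : X → X → ℝ := fun a b => dist a b with hD
  have hf0 : ∀ y, 0 ≤ f y := kdist_nonneg P k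
  obtain ⟨x₀, hx₀⟩ := hKne
  have hε : 0 ≤ ε := le_trans (hf0 x₀) (hsample.1 x₀ hx₀)
  have hmemL : ∀ p, p ∈ L ↔ p ∈ P := fun p => by rw [hperm.mem_iff, Finset.mem_toList]
  obtain ⟨S, hSsub, hSeq⟩ := declutterAux_append D f L []
  have hQS : Q = S := by rw [hQdef, declutter, hSeq]; simp
  have hQsubL : ∀ q ∈ Q, q ∈ L := fun q hq => hSsub.subset (hQS ▸ hq)
  have hQsorted : Q.Pairwise (fun a b => f a ≤ f b) := hQS ▸ hsortL.sublist hSsub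
  have hQpair : Q.Pairwise (fun r q => 2 * f q ≤ D q r) := by
    rw [hQdef]
    exact declutterAux_pairwise D f L [] List.Pairwise.nil
  have hpair2 : Q.Pairwise (fun r q => (2 * f q ≤ D q r) ∧ f r ≤ f q) := hQpair.and hQsorted
  have hsym : ∀ a ∈ Q, ∀ b ∈ Q, a ≠ b →
      ((2 * f b ≤ D b a ∧ f a ≤ f b) ∨ (2 * f a ≤ D a b ∧ f b ≤ f a)) := by
    have hpair3 : Q.Pairwise (fun a b =>
        (2 * f b ≤ D b a ∧ f a ≤ f b) ∨ (2 * f a ≤ D a b ∧ f b ≤ f a)) :=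
      List.Pairwise.imp (fun h => Or.inl h) hpair2
    intro a ha b hb hab
    haveI : Std.Symm (fun a b : X =>
        (2 * f b ≤ D b a ∧ f a ≤ f b) ∨ (2 * f a ≤ D a b ∧ f b ≤ f a)) :=
      ⟨fun u v huv => huv.symm⟩
    exact hpair3.forall ha hb hab
  have hcover : ∀ p ∈ L, ∃ r ∈ Q, (D p r < 2 * f p ∧ f r ≤ f p) ∨ r = p := by
    rw [hQdef]
    exact declutterAux_cover D f L [] (by simp) hsortL
  -- every kept point has small k-distance
  have hkey : ∀ q ∈ Q, f q ≤ 6 * ε := by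
    intro q hq
    obtain ⟨x, hxK, hxdist⟩ := hK.exists_infDist_eq_dist ⟨x₀, hx₀⟩ q
    have hqx : dist q x ≤ f q + ε := by
      rw [← hxdist]
      exact hsample.2 q
    have hfx : f x ≤ ε := hsample.1 x hxK
    obtain ⟨p, hpP, hpx⟩ := exists_near P k hk hkP x
    have hpx' : dist x p ≤ ε := hpx.trans hfx
    have hfp : f p ≤ 2 * ε := by
      have := kdist_le_add P k hk hkP x p
      rw [← hf] at this
      linarith
    have hpL : p ∈ L := (hmemL p).mpr hpP
    obtain ⟨r, hrQ, hrcase⟩ := hcover p hpL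
    rcases hrcase with ⟨hdpr, hfr⟩ | rfl
    · -- r is a kept witness near p
      have hfr2 : f r ≤ 2 * ε := hfr.trans hfp
      have hdpr4 : D p r < 4 * ε := by
        have : 2 * f p ≤ 4 * ε := by linarith
        linarith
      by_cases hrq : r = q
      · subst hrq; linarith
      · rcases hsym q hq r hrQ (fun h => hrq h.symm) with ⟨h1, h2⟩ | ⟨h1, h2⟩
        · linarith
        · have hqr : D q r ≤ dist q x + dist x p + D p r := by
            simp only [hD]
            calc dist q r ≤ dist q p + dist p r := dist_triangle q p r
              _ ≤ (dist q x + dist x p) + dist p r := by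
                  have := dist_triangle q x p
                  linarith
          simp only [hD] at hqr h1 hdpr4 ⊢
          linarith
    · -- p itself was kept
      by_cases hpq : r = q
      · subst hpq; linarith
      · rcases hsym q hq r hrQ (fun h => hpq h.symm) with ⟨h1, h2⟩ | ⟨h1, h2⟩
        · linarith
        · have hqr : D q r ≤ dist q x + dist x r := by
            simp only [hD]
            exact dist_triangle q x r
          simp only [hD] at hqr h1
          linarith
  refine hausdorffDist_le_of_infDist (by linarith) ?_ ?_
  · -- K is covered by Q
    intro y hyK
    have hfy : f y ≤ ε := hsample.1 y hyK
    obtain ⟨p, hpP, hpy⟩ := exists_near P k hk hkP y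
    have hpy' : dist y p ≤ ε := hpy.trans hfy
    have hfp : f p ≤ 2 * ε := by
      have := kdist_le_add P k hk hkP y p
      rw [← hf] at this
      linarith
    have hpL : p ∈ L := (hmemL p).mpr hpP
    obtain ⟨r, hrQ, hrcase⟩ := hcover p hpL
    have hrmem : r ∈ {x | x ∈ Q} := hrQ
    rcases hrcase with ⟨hdpr, _⟩ | rfl
    · have hd5 : dist y r ≤ 7 * ε := by
        simp only [hD] at hdpr
        calc dist y r ≤ dist y p + dist p r := dist_triangle y p r
          _ ≤ ε + 4 * ε := by
              have : 2 * f p ≤ 4 * ε := by linarith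
              linarith
          _ ≤ 7 * ε := by linarith
      exact le_trans (infDist_le_dist_of_mem hrmem) hd5
    · exact le_trans (infDist_le_dist_of_mem hrmem) (by linarith)
  · -- Q is close to K
    intro q hq
    have h1 : infDist q K ≤ f q + ε := hsample.2 q
    have h2 : f q ≤ 6 * ε := hkey q hq
    linarith
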